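/- Adding a vertex (together with any set of arcs incident to it) to a simple digraph increases the throttling number by at most one, and deleting a vertex from a simple digraph changes the throttling number by at most one in either direction. -/
import Mathlib


open Set

/-- One time step of standard zero forcing on a digraph with arc relation `A`:
every blue vertex having a unique white out-neighbor forces it blue. -/
def dstep {V : Type*} (A : V → V → Prop) (S : Set V) : Set V :=
  S ∪ {w | ∃ u ∈ S, A u w ∧ ∀ x, A u x → x ∉ S → x = w}

/-- `B` is a zero forcing set of the digraph with arc relation `A`. -/
def IsZFS {V : Type*} (A : V → V → Prop) (B : Set V) : Prop :=
  ∃ t, (dstep A)^[t] B = Set.univ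

/-- Propagation time of `B` in the digraph with arc relation `A`. -/
noncomputable def dpt {V : Type*} (A : V → V → Prop) (B : Set V) : ℕ :=
  sInf {t | (dstep A)^[t] B = Set.univ}

/-- The throttling number of the digraph with arc relation `A`. -/
noncomputable def dth {V : Type*} (A : V → V → Prop) : ℕ :=
  sInf {k | ∃ B : Set V, IsZFS A B ∧ k = B.ncard + dpt A B}

lemma mem_dstep {V : Type*} (A : V → V → Prop) (S : Set V) (w : V) :
    w ∈ dstep A S ↔ w ∈ S ∨ ∃ u ∈ S, A u w ∧ ∀ x, A u x → x ∉ S → x = w := Iff.rfl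

lemma dstep_subset {V : Type*} (A : V → V → Prop) (S : Set V) : S ⊆ dstep A S :=
  Set.subset_union_left

lemma dstep_mono {V : Type*} (A : V → V → Prop) {S T : Set V} (h : S ⊆ T) :
    dstep A S ⊆ dstep A T := by
  intro w hw
  rcases (mem_dstep A S w).1 hw with hw | ⟨u, hu, hA, hf⟩
  · exact Or.inl (h hw)
  · by_cases hwT : w ∈ T
    · exact Or.inl hwT
    · exact Or.inr ⟨u, h hu, hA, fun x hx hxT => hf x hx (fun hxS => hxT (h hxS))⟩

lemma dstep_iter_mono {V : Type*} (A : V → V → Prop) {S T : Set V} (h : S ⊆ T) (k : ℕ) :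
    (dstep A)^[k] S ⊆ (dstep A)^[k] T := by
  induction k with
  | zero => exact h
  | succ k ih =>
    rw [Function.iterate_succ_apply', Function.iterate_succ_apply']
    exact dstep_mono A ih

lemma dstep_iter_le {V : Type*} (A : V → V → Prop) (S : Set V) {k l : ℕ} (h : k ≤ l) :
    (dstep A)^[k] S ⊆ (dstep A)^[l] S := by
  induction l with
  | zero => simp [Nat.le_zero.mp h]
  | succ l ih =>
    rcases Nat.lt_or_ge k (l+1) with hk | hk
    · rw [Function.iterate_succ_apply']
      exact (ih (Nat.lt_succ_iff.mp hk)).trans (dstep_subset A _)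
    · simp [le_antisymm h hk]

lemma dth_mem {V : Type*} [Fintype V] (A : V → V → Prop) :
    ∃ B : Set V, IsZFS A B ∧ dth A = B.ncard + dpt A B := by
  have hne : {k | ∃ B : Set V, IsZFS A B ∧ k = B.ncard + dpt A B}.Nonempty :=
    ⟨(Set.univ : Set V).ncard + dpt A Set.univ, Set.univ, ⟨0, rfl⟩, rfl⟩
  exact Nat.sInf_mem hne

lemma dth_le {V : Type*} (A : V → V → Prop) {B : Set V} (hB : IsZFS A B) :
    dth A ≤ B.ncard + dpt A B :=
  Nat.sInf_le ⟨B, hB, rfl⟩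

lemma dpt_spec {V : Type*} (A : V → V → Prop) {B : Set V} (hB : IsZFS A B) :
    (dstep A)^[dpt A B] B = Set.univ :=
  Nat.sInf_mem hB

lemma dpt_le {V : Type*} (A : V → V → Prop) {B : Set V} {t : ℕ}
    (h : (dstep A)^[t] B = Set.univ) : dpt A B ≤ t :=
  Nat.sInf_le h

/-- Adding a vertex (with any arcs incident to it) increases the throttling number by at
most one, and deleting a vertex changes the throttling number by at most one in either
direction. -/
theorem stmt6 {V : Type*} [Fintype V] (A : V → V → Prop) (hirr : Irreflexive A)
    (A' : Option V → Option V → Prop)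
    (hext : ∀ u v : V, A' (some u) (some v) ↔ A u v)
    (hloop : ¬ A' none none) :
    dth A' ≤ dth A + 1 ∧ dth A ≤ dth A' + 1 := by
  constructor
  · -- dth A' ≤ dth A + 1
    obtain ⟨B, hZ, hEq⟩ := dth_mem A
    set t := dpt A B with ht
    have hB : (dstep A)^[t] B = Set.univ := dpt_spec A hZ
    set B' : Set (Option V) := insert none (some '' B) with hB'
    -- key simulation
    have key : ∀ k, insert none (some '' ((dstep A)^[k] B)) ⊆ (dstep A')^[k] B' := by
      intro k
      induction k with
      | zero => exact subset_rfl
      | succ k ih =>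
        rw [Function.iterate_succ_apply' (dstep A'), Function.iterate_succ_apply' (dstep A)]
        refine Set.Subset.trans ?_ (dstep_mono A' ih)
        set S := (dstep A)^[k] B with hS
        intro x hx
        rcases hx with hx | ⟨w, hw, rfl⟩
        · exact Or.inl (Or.inl (by simp [hx]))
        · rcases (mem_dstep A S w).1 hw with hwS | ⟨u, hu, hA, hf⟩
          · exact Or.inl (Or.inr ⟨w, hwS, rfl⟩)
          · refine Or.inr ⟨some u, Or.inr ⟨u, hu, rfl⟩, (hext u w).2 hA, ?_⟩
            intro x hx hxS
            match x with
            | none => exact absurd (Or.inl rfl) hxS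
            | some y =>
              have hyS : y ∉ S := fun h => hxS (Or.inr ⟨y, h, rfl⟩)
              exact congrArg some (hf y ((hext u y).1 hx) hyS)
    have huniv : (dstep A')^[t] B' = Set.univ := by
      apply Set.eq_univ_of_univ_subset
      intro x _
      apply key t
      rw [hB]
      match x with
      | none => exact Or.inl rfl
      | some y => exact Or.inr ⟨y, trivial, rfl⟩
    have hZ' : IsZFS A' B' := ⟨t, huniv⟩
    have hcard : B'.ncard = B.ncard + 1 := by
      rw [hB', Set.ncard_insert_of_notMem (by simp) (Set.toFinite _),
        Set.ncard_image_of_injective _ (Option.some_injective V)]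
    calc dth A' ≤ B'.ncard + dpt A' B' := dth_le A' hZ'
      _ ≤ B.ncard + 1 + t := by
          have := dpt_le A' huniv
          omega
      _ = dth A + 1 := by omega
  · -- dth A ≤ dth A' + 1
    obtain ⟨B', hZ, hEq⟩ := dth_mem A'
    set t := dpt A' B' with ht
    have hB : (dstep A')^[t] B' = Set.univ := dpt_spec A' hZ
    set S : ℕ → Set (Option V) := fun k => (dstep A')^[k] B' with hSdef
    -- vertices newly forced by `none`
    set W : Set V := {w | ∃ k, some w ∉ S k ∧ A' none (some w) ∧
      ∀ x, A' none x → x ∉ S k → x = some w} with hWdef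
    have hSmono : ∀ {k l : ℕ}, k ≤ l → S k ⊆ S l := fun h => dstep_iter_le A' B' h
    have hWsub : W.Subsingleton := by
      have aux : ∀ w₁ w₂ : V, ∀ k₁ k₂ : ℕ, k₁ ≤ k₂ →
          (some w₁ ∉ S k₁ ∧ A' none (some w₁) ∧ ∀ x, A' none x → x ∉ S k₁ → x = some w₁) →
          (some w₂ ∉ S k₂ ∧ A' none (some w₂) ∧ ∀ x, A' none x → x ∉ S k₂ → x = some w₂) →
          w₁ = w₂ := by
        intro w₁ w₂ k₁ k₂ hk ⟨h1n, h1a, h1f⟩ ⟨h2n, h2a, h2f⟩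
        by_contra hne
        have := h1f (some w₂) h2a (fun hmem => h2n (hSmono hk hmem))
        exact hne (Option.some_injective V this).symm
      rintro w₁ ⟨k₁, h₁⟩ w₂ ⟨k₂, h₂⟩
      rcases le_total k₁ k₂ with h | h
      · exact aux w₁ w₂ k₁ k₂ h h₁ h₂
      · exact (aux w₂ w₁ k₂ k₁ h h₂ h₁).symm
    have hWcard : W.ncard ≤ 1 := by
      rcases hWsub.eq_empty_or_singleton with h | ⟨a, h⟩ <;> simp [h]
    set B : Set V := (some ⁻¹' B') ∪ W with hBdef
    -- key simulation
    have key : ∀ k, (some ⁻¹' S k) ∪ W ⊆ (dstep A)^[k] B := by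
      intro k
      induction k with
      | zero => exact subset_rfl
      | succ k ih =>
        rw [Function.iterate_succ_apply']
        have hWT : W ⊆ (dstep A)^[k] B := fun w hw => ih (Or.inr hw)
        rintro w (hw | hw)
        · -- some w ∈ S (k+1) = dstep A' (S k)
          have hw' : some w ∈ dstep A' (S k) := by
            have : S (k+1) = dstep A' (S k) := Function.iterate_succ_apply' _ _ _
            rw [← this]; exact hw
          by_cases hwk : some w ∈ S k
          · exact dstep_subset A _ (ih (Or.inl hwk))
          rcases (mem_dstep A' (S k) (some w)).1 hw' with h | ⟨u', hu', hA, hf⟩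
          · exact absurd h hwk
          match u' with
          | none =>
            exact dstep_subset A _ (hWT ⟨k, hwk, hA, hf⟩)
          | some u =>
            have huT : u ∈ (dstep A)^[k] B := ih (Or.inl hu')
            refine Or.inr ⟨u, huT, (hext u w).1 hA, ?_⟩
            intro x hx hxT
            have hxS : some x ∉ S k := fun h => hxT (ih (Or.inl h))
            exact Option.some_injective V (hf (some x) ((hext u x).2 hx) hxS)
        · exact dstep_subset A _ (hWT hw)
    have huniv : (dstep A)^[t] B = Set.univ := by
      apply Set.eq_univ_of_univ_subset
      intro x _
      exact key t (Or.inl (by rw [hSdef]; simp only; rw [hB]; trivial))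
    have hZA : IsZFS A B := ⟨t, huniv⟩
    have hcard : B.ncard ≤ B'.ncard + 1 := by
      have h1 : (some ⁻¹' B').ncard ≤ B'.ncard := by
        have := Set.ncard_image_of_injective (some ⁻¹' B') (Option.some_injective V)
        rw [← this]
        exact Set.ncard_le_ncard (Set.image_preimage_subset _ _) (Set.toFinite _)
      calc B.ncard ≤ (some ⁻¹' B').ncard + W.ncard :=
            Set.ncard_union_le _ _
        _ ≤ B'.ncard + 1 := by omega
    calc dth A ≤ B.ncard + dpt A B := dth_le A hZA
      _ ≤ B'.ncard + 1 + t := by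
          have := dpt_le A huniv
          omega
      _ = dth A' + 1 := by omega
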